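/- Lemma 4(a): Let T be a k-uniform supertree on n vertices with m = (n−1)/(k−1) ≥ 2 edges, where k ≥ 3. Then h(T) = Σ_{v} d(v)·log₂ d(v) ≥ 2(m − 1)·log₂ 2 = 2(m − 1), and equality holds if and only if every vertex of T has degree at most 2. -/

import Mathlib

open Finset

/-- Degree of a vertex in a hypergraph given by its edge set. -/
def hdeg {V : Type*} [DecidableEq V] (E : Finset (Finset V)) (v : V) : ℕ :=
  (E.filter (fun e => v ∈ e)).card

/-- `h(H) = Σ_{v ∈ V} d(v)·log₂ d(v)`. -/
noncomputable def hval {V : Type*} [Fintype V] [DecidableEq V]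
    (E : Finset (Finset V)) : ℝ :=
  ∑ v : V, (hdeg E v : ℝ) * Real.logb 2 (hdeg E v)

/-- The hypergraph is connected: the simple graph on `V` in which `u` is adjacent
to `w` iff `u ≠ w` and some edge contains both is connected. -/
def hconn {V : Type*} (E : Finset (Finset V)) : Prop :=
  (SimpleGraph.fromRel (fun u w => ∃ e ∈ E, u ∈ e ∧ w ∈ e)).Connected

lemma logb24 : Real.logb 2 (4:ℝ) = 2 := by
  have hlog2 : Real.log 2 ≠ 0 := ne_of_gt (Real.log_pos (by norm_num))
  rw [Real.logb, show (4:ℝ) = 2^(2:ℕ) by norm_num, Real.log_pow]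
  field_simp
  norm_num

lemma key_lt (d : ℕ) (hd : 3 ≤ d) :
    2 * ((d : ℝ) - 1) < (d : ℝ) * Real.logb 2 d := by
  have hlog2 : (0:ℝ) < Real.log 2 := Real.log_pos (by norm_num)
  rcases eq_or_lt_of_le hd with h3 | h4
  · subst h3
    push_cast
    rw [Real.logb, show (3:ℝ) * (Real.log 3 / Real.log 2) = 3 * Real.log 3 / Real.log 2 by ring,
      lt_div_iff₀ hlog2]
    have h : Real.log (2^4 : ℝ) < Real.log (3^3 : ℝ) :=
      Real.log_lt_log (by norm_num) (by norm_num)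
    rw [Real.log_pow, Real.log_pow] at h
    push_cast at h
    nlinarith
  · have h4 : 4 ≤ d := h4
    have hdpos : (0:ℝ) < d := by
      have : (4:ℝ) ≤ d := by exact_mod_cast h4
      linarith
    have hlb : (2:ℝ) ≤ Real.logb 2 d := by
      have := (Real.logb_le_logb (b := 2) (x := 4) (y := (d:ℝ)) (by norm_num) (by norm_num)
        hdpos).2 (by exact_mod_cast h4)
      rwa [logb24] at this
    nlinarith

lemma key_le (d : ℕ) (hd : 1 ≤ d) :
    2 * ((d : ℝ) - 1) ≤ (d : ℝ) * Real.logb 2 d := by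
  rcases lt_or_ge d 3 with h | h
  · interval_cases d <;> norm_num
  · exact (key_lt d h).le

lemma key_eq (d : ℕ) (hd1 : 1 ≤ d) (hd2 : d ≤ 2) :
    (d : ℝ) * Real.logb 2 d = 2 * ((d : ℝ) - 1) := by
  interval_cases d <;> norm_num

lemma sum_hdeg {V : Type*} [Fintype V] [DecidableEq V] (E : Finset (Finset V)) :
    ∑ v : V, hdeg E v = ∑ e ∈ E, e.card := by
  simp only [hdeg, Finset.card_filter]
  rw [Finset.sum_comm]
  refine Finset.sum_congr rfl fun e _ => ?_
  rw [Finset.sum_ite_mem, Finset.univ_inter, Finset.sum_const, smul_eq_mul, mul_one]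

/-- Lemma 4(a): for a k-uniform supertree with `m ≥ 2` edges, `h(T) ≥ 2(m−1)`,
with equality iff every vertex has degree at most 2. -/
theorem stmt_5 {V : Type*} [Fintype V] [DecidableEq V] (k n m : ℕ) (hk : 3 ≤ k)
    (E : Finset (Finset V)) (hunif : ∀ e ∈ E, e.card = k)
    (hn : Fintype.card V = n) (hm : E.card = m) (hm2 : 2 ≤ m)
    (hc : hconn E) (hacyc : m * (k - 1) = n - 1) :
    2 * ((m : ℝ) - 1) ≤ hval E ∧
      (hval E = 2 * ((m : ℝ) - 1) ↔ ∀ v : V, hdeg E v ≤ 2) := by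
  -- basic arithmetic on n, m, k
  have hmk4 : 4 ≤ m * (k - 1) := by
    calc (4:ℕ) = 2 * 2 := rfl
    _ ≤ m * (k - 1) := Nat.mul_le_mul hm2 (by omega)
  have hn5 : 5 ≤ n := by omega
  have hmk : m * k = n - 1 + m := by
    have h1 : m * k = m * (k - 1) + m := by
      conv_lhs => rw [show k = (k - 1) + 1 by omega]
      ring
    rw [h1, hacyc]
  -- every vertex is in some edge
  have hdpos : ∀ v : V, 1 ≤ hdeg E v := by
    intro v
    have hcard : 1 < Fintype.card V := by omega
    obtain ⟨w, hw⟩ := Fintype.exists_ne_of_one_lt_card hcard v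
    obtain ⟨p⟩ := hc.preconnected v w
    have hne : v ≠ w := hw.symm
    have hex : ∃ e ∈ E, v ∈ e := by
      cases p with
      | nil => exact absurd rfl hne
      | cons h q =>
        rcases h with ⟨-, ⟨e, he, hv, -⟩ | ⟨e, he, -, hv⟩⟩ <;> exact ⟨e, he, hv⟩
    obtain ⟨e, he, hv⟩ := hex
    have : e ∈ E.filter (fun e => v ∈ e) := Finset.mem_filter.2 ⟨he, hv⟩
    exact Finset.card_pos.2 ⟨e, this⟩ 
  -- sum of degrees
  have hsumd : ∑ v : V, hdeg E v = m * k := by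
    rw [sum_hdeg]
    rw [Finset.sum_congr rfl hunif, Finset.sum_const, smul_eq_mul, hm]
  -- sum of lower bounds
  have hsumlb : ∑ v : V, 2 * ((hdeg E v : ℝ) - 1) = 2 * ((m : ℝ) - 1) := by
    have hcast : ∑ v : V, (hdeg E v : ℝ) = (m : ℝ) * k := by
      rw [← Nat.cast_sum, hsumd]; push_cast; ring
    have hnr : ((n : ℝ)) = (m : ℝ) * k - m + 1 := by
      have : (m * k : ℕ) = (n - 1 + m : ℕ) := hmk
      have h2 : ((m * k : ℕ) : ℝ) = ((n - 1 + m : ℕ) : ℝ) := by exact_mod_cast this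
      rw [Nat.cast_add, Nat.cast_sub (by omega)] at h2
      push_cast at h2 ⊢
      linarith
    calc ∑ v : V, 2 * ((hdeg E v : ℝ) - 1)
        = 2 * ((∑ v : V, (hdeg E v : ℝ)) - Fintype.card V) := by
          have h0 : ∑ _v : V, (2:ℝ) = 2 * Fintype.card V := by
            simp [Finset.card_univ, mul_comm]
          rw [mul_sub, Finset.mul_sum, ← h0, ← Finset.sum_sub_distrib]
          exact Finset.sum_congr rfl fun v _ => by ring
      _ = 2 * ((m : ℝ) * k - n) := by rw [hcast, hn]
      _ = 2 * ((m : ℝ) - 1) := by rw [hnr]; ring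
  have hle : ∀ v ∈ (Finset.univ : Finset V),
      2 * ((hdeg E v : ℝ) - 1) ≤ (hdeg E v : ℝ) * Real.logb 2 (hdeg E v) :=
    fun v _ => key_le _ (hdpos v)
  constructor
  · rw [hval, ← hsumlb]
    exact Finset.sum_le_sum hle
  · constructor
    · intro heq v
      by_contra h3
      have h3 : 3 ≤ hdeg E v := by omega
      have heq' : ∑ v : V, 2 * ((hdeg E v : ℝ) - 1)
          = ∑ v : V, (hdeg E v : ℝ) * Real.logb 2 (hdeg E v) := by
        rw [hsumlb, ← heq]; rfl
      have := ((Finset.sum_eq_sum_iff_of_le hle).1 heq' v (Finset.mem_univ v)).symm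
      exact absurd this (ne_of_gt (key_lt _ h3))
    · intro hd2
      rw [hval, ← hsumlb]
      exact Finset.sum_congr rfl fun v _ => key_eq _ (hdpos v) (hd2 v)
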